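/- Every odd superperfect number is a perfect square, i.e., if n is odd and σ(σ(n)) = 2n, then there exists a natural number m with n = m². -/

import Mathlib

open Finset

/-- If all exponents in the factorization of `n` are even, `n` is a square. -/
lemma aux_sq_of_even_factorization (n : ℕ) (hn : n ≠ 0)
    (h : ∀ p, Even (n.factorization p)) : ∃ m : ℕ, n = m ^ 2 := by
  refine ⟨∏ p ∈ n.primeFactors, p ^ (n.factorization p / 2), ?_⟩
  rw [← Finset.prod_pow]
  conv_lhs => rw [← Nat.factorization_prod_pow_eq_self hn]
  rw [Nat.prod_factorization_eq_prod_primeFactors]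
  refine Finset.prod_congr rfl fun p _ => ?_
  rw [← pow_mul, Nat.div_mul_cancel (h p).two_dvd]

/-- For odd `n`, if the sum of divisors is odd then `n` is a square. -/
lemma aux_odd_sigma (n : ℕ) (hn : n ≠ 0) (hodd : Odd n)
    (hs : Odd (∑ d ∈ Nat.divisors n, d)) : ∃ m : ℕ, n = m ^ 2 := by
  have hcard : Odd (#n.divisors) := by
    rw [← ZMod.natCast_eq_one_iff_odd] at hs ⊢
    rw [Nat.cast_sum] at hs
    rw [← hs]
    rw [Finset.cast_card]
    refine Finset.sum_congr rfl fun d hd => ?_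
    have hd' : Odd d := by
      rcases Nat.even_or_odd d with he | ho
      · exfalso
        have h2 : 2 ∣ n := he.two_dvd.trans (Nat.dvd_of_mem_divisors hd)
        rw [Nat.odd_iff] at hodd
        omega
      · exact ho
    rw [ZMod.natCast_eq_one_iff_odd.mpr hd']
  refine aux_sq_of_even_factorization n hn fun p => ?_
  by_cases hp : p ∈ n.primeFactors
  · rw [Nat.card_divisors hn] at hcard
    by_contra hev
    rw [Nat.not_even_iff_odd] at hev
    have h2 : 2 ∣ n.factorization p + 1 := by
      rcases hev with ⟨k, hk⟩; exact ⟨k + 1, by omega⟩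
    have : 2 ∣ #n.divisors := by
      rw [Nat.card_divisors hn]
      exact h2.trans (Finset.dvd_prod_of_mem _ hp)
    rw [Nat.odd_iff] at hcard
    rw [Nat.card_divisors hn] at this
    omega
  · have h0 : n.factorization p = 0 := by
      rwa [← Nat.support_factorization, Finsupp.notMem_support_iff] at hp
    rw [h0]
    exact Even.zero

theorem odd_superperfect_is_square (n : ℕ) (hn : 0 < n) (hodd : Odd n)
    (h : (∑ d ∈ Nat.divisors (∑ d ∈ Nat.divisors n, d), d) = 2 * n) :
    ∃ m : ℕ, n = m ^ 2 := by
  have hn0 : n ≠ 0 := hn.ne'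
  set S := ∑ d ∈ Nat.divisors n, d with hSdef
  rcases Nat.even_or_odd S with hev | hodds
  swap
  · exact aux_odd_sigma n hn0 hodd hodds
  exfalso
  have hS0 : S ≠ 0 := by
    have hpos : 0 < S := Finset.sum_pos (fun i hi => Nat.pos_of_mem_divisors hi)
      ⟨n, Nat.mem_divisors_self n hn0⟩
    omega
  set a := S.factorization 2 with ha
  set P := 2 ^ a with hP
  set u := S / 2 ^ a with hu
  have hSa : P * u = S := Nat.ordProj_mul_ordCompl_eq_self S 2
  have hP0 : 0 < P := Nat.pow_pos (by norm_num)
  have hu0 : 0 < u := Nat.ordCompl_pos 2 hS0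
  have huodd : ¬ 2 ∣ u := Nat.not_dvd_ordCompl Nat.prime_two hS0
  have ha1 : 1 ≤ a := (Nat.Prime.factorization_pos_of_dvd Nat.prime_two hS0 hev.two_dvd)
  have hP2 : 2 ≤ P := by
    calc (2:ℕ) = 2 ^ 1 := (pow_one 2).symm
    _ ≤ 2 ^ a := Nat.pow_le_pow_right (by norm_num) ha1
  have hcop : Nat.Coprime (2 ^ a) u :=
    Nat.Coprime.pow_left a (Nat.coprime_ordCompl Nat.prime_two hS0)
  -- split the sigma
  rw [← hSa, Nat.Coprime.sum_divisors_mul hcop] at h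
  have hgeo : (∑ d ∈ (2 ^ a).divisors, d) = 2 ^ (a + 1) - 1 := by
    rw [Nat.sum_divisors_prime_pow Nat.prime_two]
    rw [Nat.geomSum_eq le_rfl]
    norm_num
  rw [hgeo] at h
  set d := 2 ^ (a + 1) - 1 with hd
  set su := ∑ d ∈ u.divisors, d with hsu
  -- basic facts about d
  have hdP : d + 1 = 2 * P := by
    have : (2:ℕ) ^ (a + 1) = 2 * P := by rw [hP, pow_succ]; ring
    have h1 : 1 ≤ (2:ℕ) ^ (a + 1) := Nat.one_le_two_pow
    omega
  have hd3 : 3 ≤ d := by omega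
  have hdodd : d % 2 = 1 := by omega
  -- d divides n
  have hd2n : d ∣ 2 * n := ⟨su, h.symm⟩
  have hdn : d ∣ n := by
    have hcd2 : Nat.Coprime d 2 := by
      rw [Nat.coprime_comm]
      exact (Nat.Prime.coprime_iff_not_dvd Nat.prime_two).mpr (by omega)
    exact hcd2.dvd_of_dvd_mul_left hd2n
  -- u ≠ 1
  have hu1 : u ≠ 1 := by
    intro h1
    have hsu1 : su = 1 := by rw [hsu, h1]; simp
    rw [hsu1, mul_one] at h
    omega
  -- su ≥ u + 1
  have hsu_ge : u + 1 ≤ su := by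
    have hsub : ({1, u} : Finset ℕ) ⊆ u.divisors := by
      intro x hx
      simp only [Finset.mem_insert, Finset.mem_singleton] at hx
      rcases hx with rfl | rfl
      · exact Nat.one_mem_divisors.mpr hu0.ne'
      · exact Nat.mem_divisors_self u hu0.ne'
    have hpair : (∑ x ∈ ({1, u} : Finset ℕ), x) = 1 + u :=
      Finset.sum_pair (by omega)
    have hmono : (∑ x ∈ ({1, u} : Finset ℕ), x) ≤ ∑ x ∈ u.divisors, x :=
      Finset.sum_le_sum_of_subset hsub
    rw [hpair] at hmono
    omega
  -- lower bound on S via a prime factor of d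
  set q := d.minFac with hq
  have hqprime : q.Prime := Nat.minFac_prime (by omega)
  have hqd : q ∣ d := Nat.minFac_dvd d
  have hqn : q ∣ n := hqd.trans hdn
  have hqled : q ≤ d := Nat.minFac_le (by omega)
  have hsubn : ({n / q, n} : Finset ℕ) ⊆ n.divisors := by
    intro x hx
    simp only [Finset.mem_insert, Finset.mem_singleton] at hx
    rcases hx with h1 | h1
    · rw [h1]; exact Nat.mem_divisors.mpr ⟨Nat.div_dvd_of_dvd hqn, hn0⟩
    · rw [h1]; exact Nat.mem_divisors_self n hn0
  have hltn : n / q < n := Nat.div_lt_self hn hqprime.one_lt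
  have hSlow : n / q + n ≤ S := by
    have hpair : (∑ x ∈ ({n / q, n} : Finset ℕ), x) = n / q + n :=
      Finset.sum_pair (by omega)
    have hmono : (∑ x ∈ ({n / q, n} : Finset ℕ), x) ≤ ∑ x ∈ n.divisors, x :=
      Finset.sum_le_sum_of_subset hsubn
    rw [hpair] at hmono
    exact hmono
  have hdivle : n / d ≤ n / q := Nat.div_le_div_left hqled hqprime.pos
  have hnd : d * (n / d) = n := Nat.mul_div_cancel' hdn
  -- key inequality: 2 * P * n ≤ d * S
  have e4 : 2 * P * n ≤ d * S := by
    calc 2 * P * n = (d + 1) * n := by rw [hdP]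
    _ = d * n + n := by ring
    _ = d * n + d * (n / d) := by rw [hnd]
    _ ≤ d * n + d * (n / q) := by
        have := Nat.mul_le_mul_left d hdivle
        omega
    _ = d * (n / q + n) := by ring
    _ ≤ d * S := Nat.mul_le_mul_left d hSlow
  -- combine
  have e5 : d * S + P * d ≤ d * S := by
    calc d * S + P * d = P * (d * (u + 1)) := by
          rw [← hSa]; ring
    _ ≤ P * (d * su) := by
          have := Nat.mul_le_mul_left d hsu_ge
          exact Nat.mul_le_mul_left P this
    _ = P * (2 * n) := by rw [h]
    _ = 2 * P * n := by ring
    _ ≤ d * S := e4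
  have : P * d = 0 := by omega
  have : 0 < P * d := Nat.mul_pos hP0 (by omega)
  omega
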